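/- arXiv:1910.01998 — 2 statements merged into one kernel-verified Lean document; each statement's English description precedes it below -/
import Mathlib

section
/- Let P(x) = ∑_{i=0}^n a_i B_i^n(x) with n ≥ 1, and let A_P and B_P be the n×n matrices of the Bernstein companion pencil: A_P has first row (-a_{n-1}, -a_{n-2}, …, -a_0), subdiagonal entries 1, and zeros elsewhere; B_P equals A_P except its (1,1) entry is -a_{n-1}+a_n/n and its diagonal entries (i,i) for i ≥ 2 are (i)/(n-i+1) in appropriate indexing (entry (k+1,k+1) = (k+1)/(n-k) for k = 1,…,n-1). Then for any real z ≠ 1, the vector v(z) with entries v_j = B_{n-j}^n(z)/(1-z) for j = 1,…,n satisfies (z·B_P − A_P)·v(z) = P(z)·e_1, where e_1 is the first standard basis vector. In particular, P(z) = 0 if and only if (z·B_P − A_P)·v(z) = 0. -/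
/-- The Bernstein basis polynomial `B_k^n(x)` on `[0,1]`. -/
noncomputable def bern (n k : ℕ) (x : ℝ) : ℝ :=
  (n.choose k : ℝ) * x ^ k * (1 - x) ^ (n - k)

/-- The matrix `A_P` of Jónsson's Bernstein companion pencil (0-indexed). -/
noncomputable def pencilA (n : ℕ) (a : ℕ → ℝ) : Matrix (Fin n) (Fin n) ℝ :=
  Matrix.of fun i j =>
    if (i : ℕ) = 0 then -(a (n - 1 - (j : ℕ)))
    else if (i : ℕ) = (j : ℕ) + 1 then 1 else 0

/-- The matrix `B_P` of Jónsson's Bernstein companion pencil (0-indexed). -/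
noncomputable def pencilB (n : ℕ) (a : ℕ → ℝ) : Matrix (Fin n) (Fin n) ℝ :=
  Matrix.of fun i j =>
    if (i : ℕ) = 0 ∧ (j : ℕ) = 0 then -(a (n - 1)) + a n / (n : ℝ)
    else if (i : ℕ) = 0 then -(a (n - 1 - (j : ℕ)))
    else if (i : ℕ) = (j : ℕ) + 1 then 1
    else if (i : ℕ) = (j : ℕ) then ((i : ℕ) + 1 : ℝ) / ((n : ℝ) - (i : ℕ)) else 0

lemma jcp_key (n m : ℕ) (hm : m < n) (z : ℝ) (hz : (1:ℝ) - z ≠ 0) :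
    z * (((m:ℝ) + 1) / ((n:ℝ) - (m:ℕ))) * (bern n (n - 1 - m) z / (1 - z))
      = bern n (n - m) z := by
  obtain ⟨s, rfl⟩ : ∃ s, n = m + s + 1 := ⟨n - m - 1, by omega⟩
  have e1 : m + s + 1 - 1 - m = s := by omega
  have e2 : m + s + 1 - m = s + 1 := by omega
  have e3 : m + s + 1 - s = m + 1 := by omega
  have e4 : m + s + 1 - (s + 1) = m := by omega
  have hc : ((m + s + 1).choose (s + 1) : ℝ) * ((s:ℝ) + 1) =
      ((m + s + 1).choose s : ℝ) * ((m:ℝ) + 1) := by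
    have h := congrArg (fun t : ℕ => (t : ℝ)) (Nat.choose_succ_right_eq (m + s + 1) s)
    push_cast [e3] at h
    linarith [h]
  have hcast : ((m + s + 1 : ℕ) : ℝ) - (m : ℝ) = (s : ℝ) + 1 := by push_cast; ring
  simp only [bern, e1, e2, e3, e4, hcast]
  field_simp
  linear_combination (-(z ^ (s + 1)) * (1 - z) ^ (m + 1)) * hc

theorem jonsson_companion_pencil (n : ℕ) (hn : 1 ≤ n) (a : ℕ → ℝ) (z : ℝ) (hz : z ≠ 1) :
    (z • pencilB n a - pencilA n a).mulVec
        (fun i : Fin n => bern n (n - 1 - (i : ℕ)) z / (1 - z)) =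
      (fun i : Fin n =>
        if (i : ℕ) = 0 then ∑ k ∈ Finset.range (n + 1), a k * bern n k z else 0) ∧
    ((∑ k ∈ Finset.range (n + 1), a k * bern n k z) = 0 ↔
      (z • pencilB n a - pencilA n a).mulVec
          (fun i : Fin n => bern n (n - 1 - (i : ℕ)) z / (1 - z)) = 0) := by
  have h1z : (1 : ℝ) - z ≠ 0 := sub_ne_zero.mpr (Ne.symm hz)
  have hterm : ∀ c b : ℝ, (z * -c - -c) * (b / (1 - z)) = c * b := by
    intro c b
    have : (z * -c - -c) * (b / (1 - z)) = (c * b) * ((1 - z) / (1 - z)) := by ring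
    rw [this, div_self h1z, mul_one]
  have hmain : (z • pencilB n a - pencilA n a).mulVec
      (fun i : Fin n => bern n (n - 1 - (i : ℕ)) z / (1 - z)) =
      fun i : Fin n =>
        if (i : ℕ) = 0 then ∑ k ∈ Finset.range (n + 1), a k * bern n k z else 0 := by
    funext x
    simp only [Matrix.mulVec, dotProduct, Matrix.sub_apply, Matrix.smul_apply,
      pencilA, pencilB, Matrix.of_apply, smul_eq_mul]
    rcases Nat.eq_zero_or_pos (x : ℕ) with hx | hx
    · -- row 0
      obtain ⟨m, rfl⟩ : ∃ m, n = m + 1 := ⟨n - 1, by omega⟩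
      simp only [hx, if_pos rfl, true_and, Nat.add_sub_cancel, reduceIte]
      rw [Fin.sum_univ_succ]
      simp only [Fin.val_zero, Fin.val_succ, Nat.sub_zero, reduceIte, Nat.succ_ne_zero,
        false_and, if_false]
      push_cast
      have hzero : (z * (-(a m) + a (m + 1) / ((m:ℝ) + 1)) - -(a m)) *
            (bern (m + 1) m z / (1 - z)) =
          a m * bern (m + 1) m z + a (m + 1) * bern (m + 1) (m + 1) z := by
        have expand : (z * (-(a m) + a (m + 1) / ((m:ℝ) + 1)) - -(a m)) *
            (bern (m + 1) m z / (1 - z)) =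
            (z * -(a m) - -(a m)) * (bern (m + 1) m z / (1 - z)) +
              z * (a (m + 1) / ((m:ℝ) + 1)) * (bern (m + 1) m z / (1 - z)) := by ring
        rw [expand, hterm]
        congr 1
        simp only [bern, Nat.choose_succ_self_right, Nat.choose_self,
          Nat.add_sub_cancel, Nat.add_sub_cancel_left, Nat.sub_self, pow_zero, pow_one]
        push_cast
        field_simp
        ring
      rw [hzero]
      have hsum : ∑ j : Fin m,
          (z * -(a (m - ((j:ℕ) + 1))) - -(a (m - ((j:ℕ) + 1)))) *
            (bern (m + 1) (m - ((j:ℕ) + 1)) z / (1 - z)) =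
          ∑ k ∈ Finset.range m, a k * bern (m + 1) k z := by
        rw [Fin.sum_univ_eq_sum_range (fun t => (z * -(a (m - (t + 1))) - -(a (m - (t + 1)))) * (bern (m + 1) (m - (t + 1)) z / (1 - z))) m]
        rw [← Finset.sum_range_reflect (fun k => a k * bern (m + 1) k z) m]
        refine Finset.sum_congr rfl fun j hj => ?_
        have e : m - (j + 1) = m - 1 - j := by omega
        rw [e, hterm]
      rw [hsum, Finset.sum_range_succ, Finset.sum_range_succ]
      ring
    · -- rows i ≥ 1
      have hx0 : (x : ℕ) ≠ 0 := Nat.pos_iff_ne_zero.mp hx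
      simp only [hx0, false_and, if_false, reduceIte]
      have hp : (x : ℕ) - 1 < n := by omega
      set p : Fin n := ⟨(x : ℕ) - 1, hp⟩ with hpdef
      have hsplit : ∀ j : Fin n,
          ((z * if (x : ℕ) = (j : ℕ) + 1 then 1
              else if (x : ℕ) = (j : ℕ) then ((x : ℕ) + 1 : ℝ) / ((n : ℝ) - (x : ℕ)) else 0) -
            if (x : ℕ) = (j : ℕ) + 1 then 1 else 0) *
            (bern n (n - 1 - (j : ℕ)) z / (1 - z)) =
          (if j = p then (z - 1) * (bern n (n - 1 - (j : ℕ)) z / (1 - z)) else 0) +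
          (if j = x then z * (((x : ℕ) + 1 : ℝ) / ((n : ℝ) - (x : ℕ))) *
              (bern n (n - 1 - (j : ℕ)) z / (1 - z)) else 0) := by
        intro j
        by_cases hjp : j = p
        · subst hjp
          have c1 : (x : ℕ) = ((p : ℕ)) + 1 := by simp [hpdef]; omega
          have c2 : p ≠ x := by
            intro h
            have := congrArg Fin.val h
            simp [hpdef] at this
            omega
          rw [if_pos c1, if_pos c1, if_pos rfl, if_neg c2]
          ring
        · by_cases hjx : j = x
          · subst hjx
            have c1 : ¬ ((j : ℕ) = (j : ℕ) + 1) := by omega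
            rw [if_neg c1, if_neg c1, if_pos rfl, if_neg hjp, if_pos rfl]
            ring
          · have c1 : ¬ ((x : ℕ) = (j : ℕ) + 1) := by
              intro h
              apply hjp
              apply Fin.ext
              simp [hpdef]
              omega
            have c2 : ¬ ((x : ℕ) = (j : ℕ)) := fun h => hjx (Fin.ext h.symm)
            rw [if_neg c1, if_neg c1, if_neg c2, if_neg hjp, if_neg hjx]
            ring
      rw [Finset.sum_congr rfl fun j _ => hsplit j, Finset.sum_add_distrib,
        Finset.sum_ite_eq', Finset.sum_ite_eq']
      simp only [Finset.mem_univ, if_pos]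
      have ep : n - 1 - ((p : ℕ)) = n - (x : ℕ) := by simp [hpdef]; omega
      rw [ep]
      have h1 : (z - 1) * (bern n (n - (x : ℕ)) z / (1 - z)) = -(bern n (n - (x : ℕ)) z) := by
        have : (z - 1) * (bern n (n - (x : ℕ)) z / (1 - z)) =
            -(bern n (n - (x : ℕ)) z) * ((1 - z) / (1 - z)) := by ring
        rw [this, div_self h1z, mul_one]
      rw [h1, jcp_key n (x : ℕ) x.isLt z h1z]
      ring
  refine ⟨hmain, ?_, ?_⟩
  · intro h
    rw [hmain]
    funext i
    simp [h]
  · intro h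
    rw [hmain] at h
    have := congrFun h ⟨0, hn⟩
    simpa using this
end

section
/- Let P(x) = ∑_{i=0}^n a_i B_i^n(x) and let (A_P, B_P) be the Jónsson companion pencil matrices. Then det(x·B_P − A_P) = P(x) as polynomials (up to the stated normalization). -/
open Polynomial Finset

noncomputable def hess (v c d : ℕ → ℝ[X]) (n : ℕ) : Matrix (Fin n) (Fin n) ℝ[X] :=
  Matrix.of fun i j =>
    if (i : ℕ) = 0 then v j
    else if (i : ℕ) = (j : ℕ) + 1 then c (i : ℕ)
    else if (i : ℕ) = (j : ℕ) then d (i : ℕ) else 0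

lemma det_hess : ∀ (n : ℕ) (v c d : ℕ → ℝ[X]),
    (hess v c d (n+1)).det =
      ∑ j ∈ Finset.range (n+1),
        v j * (∏ k ∈ Finset.Ico 1 (j+1), (-c k)) * ∏ k ∈ Finset.Ico (j+1) (n+1), d k := by
  intro n
  induction n with
  | zero =>
    intro v c d
    simp [hess, Matrix.det_fin_one]
  | succ n ih =>
    intro v c d
    rw [show n + 1 + 1 = (n+1).succ from rfl, Matrix.det_succ_column_zero,
      Fin.sum_univ_succ, Fin.sum_univ_succ]
    have hzero : ∀ i : Fin n, ((-1:ℝ[X]) ^ ((i.succ.succ : Fin (n+2)) : ℕ) *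
        hess v c d (n+2) i.succ.succ 0 *
        (((hess v c d (n+2)).submatrix (Fin.succAbove i.succ.succ) Fin.succ).det)) = 0 := by
      intro i
      have : hess v c d (n+2) i.succ.succ 0 = 0 := by
        simp [hess, Matrix.of_apply, Fin.val_succ]
      rw [this]; ring
    rw [Finset.sum_congr rfl (fun i _ => hzero i), Finset.sum_const_zero, add_zero]
    have h00 : hess v c d (n+2) 0 0 = v 0 := by simp [hess]
    have h10 : hess v c d (n+2) (Fin.succ 0) 0 = c 1 := by
      simp [hess, Matrix.of_apply]
    -- minor at (0,0) is lower triangular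
    have hminor0 : ((hess v c d (n+2)).submatrix (Fin.succAbove 0) Fin.succ).det
        = ∏ k ∈ Finset.Ico 1 (n+2), d k := by
      rw [Fin.succAbove_zero]
      rw [Matrix.det_of_lowerTriangular _ ?ht]
      case ht =>
        intro i j hij
        simp only [OrderDual.toDual_lt_toDual] at hij
        simp only [Matrix.submatrix_apply, hess, Matrix.of_apply, Fin.val_succ]
        have h1 : ¬ ((i:ℕ)+1 = 0) := by omega
        have h2 : ¬ ((i:ℕ)+1 = (j:ℕ)+1+1) := by omega
        have h3 : ¬ ((i:ℕ)+1 = (j:ℕ)+1) := by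
          have := (Fin.lt_iff_val_lt_val).1 hij; omega
        simp [h1, h2, h3, show ¬ (i:ℕ) = (j:ℕ)+1 by omega, show ¬ (i:ℕ) = (j:ℕ) by omega]
      rw [Finset.prod_Ico_eq_prod_range]
      simp only [Matrix.submatrix_apply, hess, Matrix.of_apply, Fin.val_succ]
      rw [← Fin.prod_univ_eq_prod_range]
      apply Finset.prod_congr rfl
      intro i _
      simp [add_comm]
    -- minor at (1,0) is the smaller hess
    have hminor1 : ((hess v c d (n+2)).submatrix (Fin.succAbove (Fin.succ 0)) Fin.succ)
        = hess (fun j => v (j+1)) (fun k => c (k+1)) (fun k => d (k+1)) (n+1) := by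
      ext i j
      simp only [Matrix.submatrix_apply, hess, Matrix.of_apply]
      have hval : (((Fin.succ 0 : Fin (n+2)).succAbove i : Fin (n+2)) : ℕ)
          = if (i:ℕ) < 1 then (i:ℕ) else (i:ℕ)+1 := by
        rcases Fin.lt_or_le i.castSucc (Fin.succ 0) with h | h
        · rw [Fin.succAbove_of_castSucc_lt _ _ h]
          have : (i:ℕ) < 1 := h
          simp [this, Fin.coe_castSucc]
        · rw [Fin.succAbove_of_le_castSucc _ _ h]
          have : ¬ ((i:ℕ) < 1) := by
            have := (Fin.le_iff_val_le_val).1 h; simp only [Fin.coe_castSucc, Fin.val_succ, Fin.val_zero] at this; omega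
          simp [this, Fin.val_succ]
      rw [hval]
      by_cases h0 : (i:ℕ) < 1
      · have : (i:ℕ) = 0 := by omega
        simp [h0, this, Fin.val_succ]
      · have hne : ¬ ((i:ℕ)+1 = 0) := by omega
        simp only [h0, if_false, Fin.val_succ, hne]
        have e2 : ((i:ℕ)+1 = (j:ℕ)+1+1) ↔ ((i:ℕ) = (j:ℕ)+1) := by omega
        have e3 : ((i:ℕ)+1 = (j:ℕ)+1) ↔ ((i:ℕ) = (j:ℕ)) := by omega
        have hne2 : ¬ ((i:ℕ) = 0) := by omega
        simp only [hne2, if_false]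
        by_cases hc : (i:ℕ) = (j:ℕ)+1
        · simp [hc]
        · rw [if_neg (by omega), if_neg hc]
          by_cases hd : (i:ℕ) = (j:ℕ)
          · rw [if_pos (by omega), if_pos hd]
          · rw [if_neg (by omega), if_neg hd]
    rw [h00, h10, hminor0, hminor1, ih]
    conv_rhs => rw [Finset.sum_range_succ', add_comm]
    rw [Finset.mul_sum]
    refine congrArg₂ (· + ·) ?_ ?_
    · simp only [Fin.val_zero, pow_zero, one_mul, Finset.Ico_self, Finset.prod_empty, mul_one,
        Nat.zero_add, zero_add]
    · apply Finset.sum_congr rfl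
      intro j _
      have hc : (∏ k ∈ Finset.Ico 1 (j+1), -c (k+1)) = ∏ k ∈ Finset.Ico 2 (j+2), -c k := by
        rw [← Finset.prod_Ico_add' (fun k => -c k) 1 (j+1) 1]
      have hd : (∏ k ∈ Finset.Ico (j+1) (n+1), d (k+1)) = ∏ k ∈ Finset.Ico (j+2) (n+2), d k := by
        rw [← Finset.prod_Ico_add' d (j+1) (n+1) 1]
      have hcc : (∏ k ∈ Finset.Ico 1 (j+1+1), -c k) = (-c 1) * ∏ k ∈ Finset.Ico 2 (j+2), -c k :=
        Finset.prod_eq_prod_Ico_succ_bot (by omega) _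
      rw [hc, hd, hcc]
      simp only [Fin.val_succ, Fin.val_zero, pow_one, zero_add]
      ring

lemma prod_ratio (n : ℕ) : ∀ (m j : ℕ), j + m = n →
    (∏ k ∈ Finset.Ico j n, (((k:ℝ)+1)/((n:ℝ)-(k:ℝ)))) = (n.choose j : ℝ) := by
  intro m
  induction m with
  | zero =>
    intro j hj
    have : j = n := by omega
    simp [this]
  | succ m ih =>
    intro j hj
    have hjn : j < n := by omega
    rw [Finset.prod_eq_prod_Ico_succ_bot hjn, ih (j+1) (by omega)]
    have hne : (n:ℝ) - (j:ℝ) ≠ 0 := by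
      have : (j:ℝ) < (n:ℝ) := by exact_mod_cast hjn
      linarith
    have h2 := Nat.choose_succ_right_eq n j
    have h3 : ((n.choose (j+1) : ℝ)) * ((j:ℝ)+1) = (n.choose j : ℝ) * ((n:ℝ) - j) := by
      have := congrArg (Nat.cast : ℕ → ℝ) h2
      push_cast [Nat.cast_sub hjn.le] at this
      linarith
    field_simp
    linarith [h3]

theorem jonsson_pencil_det (n : ℕ) (hn : 1 ≤ n) (a : ℕ → ℝ) :
    ((X : ℝ[X]) • (pencilB n a).map C - (pencilA n a).map C).det =
      ∑ i ∈ Finset.range (n + 1),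
        C (a i) * ((n.choose i : ℝ[X]) * X ^ i * (1 - X) ^ (n - i)) := by
  obtain ⟨m, rfl⟩ : ∃ m, n = m + 1 := ⟨n - 1, by omega⟩
  set v : ℕ → ℝ[X] := fun j =>
    if j = 0 then C (a m) * (1 - X) + C (a (m+1) / ((m:ℝ)+1)) * X
    else C (a (m - j)) * (1 - X) with hv
  set c : ℕ → ℝ[X] := fun _ => X - 1 with hc
  set d : ℕ → ℝ[X] := fun k => C (((k:ℝ)+1)/(((m+1:ℕ):ℝ)-(k:ℝ))) * X with hd
  have hM : ((X : ℝ[X]) • (pencilB (m+1) a).map C - (pencilA (m+1) a).map C)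
      = hess v c d (m+1) := by
    refine Matrix.ext fun i j => ?_
    simp only [Matrix.sub_apply, Matrix.smul_apply, Matrix.map_apply, pencilA, pencilB,
      hess, Matrix.of_apply, smul_eq_mul, hv, hc, hd, Nat.add_sub_cancel]
    split_ifs <;>
      first
        | (exfalso; omega)
        | (simp_all only [map_neg, map_add, map_one, map_zero, Nat.sub_zero]; push_cast; ring)
  rw [hM, det_hess m v c d]
  have hprod1 : ∀ j : ℕ, (∏ k ∈ Finset.Ico 1 (j+1), -c k) = (1 - X)^j := by
    intro j
    simp [hc, Finset.prod_const, Nat.card_Ico, neg_sub]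
  have hprod2 : ∀ j : ℕ, j < m + 1 →
      (∏ k ∈ Finset.Ico (j+1) (m+1), d k) = C (((m+1).choose (j+1) : ℝ)) * X^(m-j) := by
    intro j hjm
    simp only [hd]
    rw [Finset.prod_mul_distrib, Finset.prod_const, ← map_prod, Nat.card_Ico]
    rw [prod_ratio (m+1) (m - j) (j+1) (by omega)]
    congr 2
    omega
  have hstep : ∀ j ∈ Finset.range (m+1),
      (v j * ∏ k ∈ Finset.Ico 1 (j+1), -c k) * ∏ k ∈ Finset.Ico (j+1) (m+1), d k
      = v j * (1-X)^j * (C (((m+1).choose (j+1) : ℝ)) * X^(m-j)) := by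
    intro j hj
    rw [hprod1, hprod2 j (Finset.mem_range.mp hj)]
  rw [Finset.sum_congr rfl hstep]
  rw [← Finset.sum_range_reflect (fun j => v j * (1-X)^j *
      (C (((m+1).choose (j+1) : ℝ)) * X^(m-j))) (m+1)]
  rw [Finset.sum_range_succ, Finset.sum_range_succ (n := m+1), Finset.sum_range_succ (n := m)]
  have hmain : ∀ i ∈ Finset.range m,
      v (m + 1 - 1 - i) * (1-X)^(m + 1 - 1 - i) *
        (C (((m+1).choose ((m + 1 - 1 - i)+1) : ℝ)) * X^(m-(m + 1 - 1 - i)))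
      = C (a i) * (((m+1).choose i : ℝ[X]) * X ^ i * (1 - X) ^ (m + 1 - i)) := by
    intro i hi
    have him : i < m := Finset.mem_range.mp hi
    have e1 : m + 1 - 1 - i = m - i := by omega
    have e2 : ¬ (m - i = 0) := by omega
    have e3 : m - (m - i) = i := by omega
    have e4 : m - i + 1 = (m + 1) - i := by omega
    have e5 : (m+1).choose ((m-i)+1) = (m+1).choose i := by
      rw [e4, Nat.choose_symm (by omega)]
    rw [e1, hv]
    simp only [e2, if_false, e3, e5]
    rw [Polynomial.C_eq_natCast]
    have e7 : (1 - X : ℝ[X]) ^ (m + 1 - i) = (1 - X)^(m-i) * (1 - X) := by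
      rw [← pow_succ, e4]
    rw [e7]
    ring
  rw [Finset.sum_congr rfl hmain]
  have hlast : v (m + 1 - 1 - m) * (1-X)^(m + 1 - 1 - m) *
        (C (((m+1).choose ((m + 1 - 1 - m)+1) : ℝ)) * X^(m-(m + 1 - 1 - m)))
      = C (a m) * (((m+1).choose m : ℝ[X]) * X ^ m * (1 - X) ^ (m + 1 - m)) +
        C (a (m+1)) * (((m+1).choose (m+1) : ℝ[X]) * X ^ (m+1) * (1 - X) ^ (m + 1 - (m+1))) := by
    have e1 : m + 1 - 1 - m = 0 := by omega
    rw [e1, hv]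
    simp only [if_pos rfl, pow_zero, mul_one, Nat.sub_zero, zero_add]
    have e2 : (m+1).choose 1 = m + 1 := Nat.choose_one_right _
    have e2' : (m+1).choose m = m + 1 := by
      rw [← Nat.choose_symm (Nat.le_succ m)]; simp
    have e3 : (m+1).choose (m+1) = 1 := Nat.choose_self _
    have e4 : m + 1 - m = 1 := by omega
    have e5 : m + 1 - (m+1) = 0 := by omega
    rw [e2, e2', e3, e4, e5]
    rw [show (((m+1:ℕ) : ℝ[X])) = C (((m+1:ℕ)):ℝ) from (Polynomial.C_eq_natCast _).symm]
    have ecast : (((m+1:ℕ)):ℝ) = (m:ℝ) + 1 := by push_cast; ring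
    rw [ecast]
    have hC : C (a (m+1) / ((m:ℝ)+1)) * C ((m:ℝ)+1) = C (a (m+1)) := by
      rw [← map_mul, div_mul_cancel₀ _ (by positivity)]
    push_cast
    linear_combination (X:ℝ[X])^(m+1) * hC
  rw [hlast]
  ring
end
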